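/- If all the lifetimes T^{(l)}_j are mutually independent and for each type l they have common distribution function F_l (F̄_l := 1 − F_l), then for every type i and every τ ≥ 0, with N_i(τ) := #{j : T^{(i)}_j ≤ τ}: E[ N_i(τ) · 1{T > τ} ] = Σ_{j_1=0}^{n_1} ⋯ Σ_{j_L=0}^{n_L} j_i · Φ(n_1−j_1, …, n_L−j_L) · ∏_{l=1}^L C(n_l, j_l) F_l(τ)^{j_l} F̄_l(τ)^{n_l−j_l}. -/

import Mathlib

open MeasureTheory Finset ProbabilityTheory

/-- The survival signature of a structure function `φ`:
`Φ(c) = (∏_k C(n_k, c_k))⁻¹ · Σ_{x : exactly c_k working components of each type k} φ(x)`. -/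
noncomputable def survSig {L : ℕ} (n : Fin L → ℕ)
    (φ : ((l : Fin L) → Fin (n l) → Bool) → Bool) (c : Fin L → ℕ) : ℝ :=
  (∑ x : (l : Fin L) → Fin (n l) → Bool,
      if (∀ l, (Finset.univ.filter fun j => x l j = true).card = c l) ∧ φ x = true
      then (1 : ℝ) else 0)
    / ∏ l, (Nat.choose (n l) (c l) : ℝ)

/-- For mutually independent lifetimes with common type-`l` distribution
functions `F_l`, with `N_i(τ)` the number of failed type-`i` components by time `τ`,
`E[N_i(τ)·1{T>τ}] = Σ_j j_i Φ(n−j) ∏_l C(n_l, j_l) F_l(τ)^{j_l} F̄_l(τ)^{n_l−j_l}`. -/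
theorem stmt_10
    {Ω : Type*} [MeasurableSpace Ω] (P : Measure Ω) [IsProbabilityMeasure P]
    {L : ℕ} (hL : 1 ≤ L) (n : Fin L → ℕ) (hn : ∀ l, 1 ≤ n l)
    (T : (l : Fin L) → Fin (n l) → Ω → ℝ)
    (hTmeas : ∀ l j, Measurable (T l j))
    (hindep : iIndepFun
      (fun p : Σ l : Fin L, Fin (n l) => fun ω => T p.1 p.2 ω) P)
    (F : Fin L → ℝ → ℝ)
    (hF : ∀ l j x, (P {ω | T l j ω ≤ x}).toReal = F l x)
    (φ : ((l : Fin L) → Fin (n l) → Bool) → Bool) (hφ : Monotone φ)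
    (Tsys : Ω → ℝ) (hTsys : Measurable Tsys)
    (hT : ∀ t : ℝ, 0 ≤ t →
      {ω | t < Tsys ω} = {ω | φ (fun l j => decide (t < T l j ω)) = true})
    (i : Fin L) (τ : ℝ) (hτ : 0 ≤ τ) :
    ∫ ω, (if τ < Tsys ω
        then ((Finset.univ.filter fun j : Fin (n i) => T i j ω ≤ τ).card : ℝ)
        else 0) ∂P
    = ∑ j : (l : Fin L) → Fin (n l + 1),
        (j i : ℝ) * survSig n φ (fun l => n l - (j l : ℕ))
          * ∏ l, (Nat.choose (n l) (j l) : ℝ)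
              * F l τ ^ (j l : ℕ) * (1 - F l τ) ^ (n l - (j l : ℕ)) := by
  classical
  set X : Ω → (l : Fin L) → Fin (n l) → Bool := fun ω l j => decide (τ < T l j ω) with hXdef
  set k : ((l : Fin L) → Fin (n l) → Bool) → Fin L → ℕ :=
    fun x l => (Finset.univ.filter fun j => x l j = true).card with hkdef
  have hkle : ∀ x l, k x l ≤ n l := by
    intro x l
    simpa using (Finset.card_filter_le Finset.univ fun j => x l j = true)
  set g : ((l : Fin L) → Fin (n l) → Bool) → ℝ :=
    fun x => if φ x = true then ((n i - k x i : ℕ) : ℝ) else 0 with hgdef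
  set B : (p : Σ l : Fin L, Fin (n l)) → Bool → Set Ω :=
    fun p b => (fun ω => T p.1 p.2 ω) ⁻¹' (if b then Set.Ioi τ else Set.Iic τ) with hBdef
  have hBm : ∀ (p : Σ l : Fin L, Fin (n l)) (b : Bool),
      MeasurableSet (if b then Set.Ioi τ else Set.Iic τ : Set ℝ) := by
    intro p b; cases b
    · simpa using measurableSet_Iic
    · simpa using measurableSet_Ioi
  have hBmeas : ∀ p b, MeasurableSet (B p b) := fun p b => (hTmeas p.1 p.2) (hBm p b)
  have hPB : ∀ p b, (P (B p b)).toReal = if b then 1 - F p.1 τ else F p.1 τ := by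
    intro p b; cases b
    · simpa [B, Set.preimage] using hF p.1 p.2 τ
    · have hBc : B p true = ((fun ω => T p.1 p.2 ω) ⁻¹' Set.Iic τ)ᶜ := by
        ext ω; simp [B, not_le]
      rw [hBc, measure_compl (hTmeas p.1 p.2 measurableSet_Iic) (measure_ne_top P _),
        measure_univ,
        ENNReal.toReal_sub_of_le prob_le_one ENNReal.one_ne_top, ENNReal.toReal_one]
      have h2 : (P ((fun ω => T p.1 p.2 ω) ⁻¹' Set.Iic τ)).toReal = F p.1 τ := hF p.1 p.2 τ
      rw [h2, if_pos rfl]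
  have hXset : ∀ x, {ω | X ω = x} = ⋂ p : Σ l : Fin L, Fin (n l), B p (x p.1 p.2) := by
    intro x; ext ω
    simp only [Set.mem_setOf_eq, funext_iff, Set.mem_iInter, Sigma.forall]
    refine forall_congr' fun l => forall_congr' fun j => ?_
    cases h : x l j <;>
      simp [B, X, Set.mem_preimage, decide_eq_true_iff, decide_eq_false_iff_not, not_lt, h]
  have hXsetMeas : ∀ x, MeasurableSet {ω | X ω = x} := by
    intro x; rw [hXset]; exact MeasurableSet.iInter fun p => hBmeas p _
  -- probability of each configuration
  have hPX : ∀ x, (P {ω | X ω = x}).toReal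
      = ∏ l, (F l τ) ^ (n l - k x l) * (1 - F l τ) ^ (k x l) := by
    intro x
    rw [hXset, hindep.meas_iInter (fun p => ⟨_, hBm p (x p.1 p.2), rfl⟩),
      ENNReal.toReal_prod]
    have : ∀ p : Σ l : Fin L, Fin (n l),
        (P (B p (x p.1 p.2))).toReal = if x p.1 p.2 then 1 - F p.1 τ else F p.1 τ :=
      fun p => hPB p _
    rw [Finset.prod_congr rfl fun p _ => this p]
    rw [← Finset.univ_sigma_univ, Finset.prod_sigma]
    refine Finset.prod_congr rfl fun l _ => ?_
    rw [Finset.prod_ite (fun _ => (1 - F l τ)) (fun _ => F l τ),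
      Finset.prod_const, Finset.prod_const]
    have hc : (Finset.univ.filter fun j => ¬ x l j = true).card = n l - k x l := by
      have := Finset.card_filter_add_card_filter_not
        (s := (Finset.univ : Finset (Fin (n l)))) (p := fun j => x l j = true)
      simp only [Finset.card_univ, Fintype.card_fin] at this
      have hk' : k x l = (Finset.univ.filter fun j => x l j = true).card := rfl
      omega
    rw [hc]
    ring_nf
    rfl
  -- pointwise decomposition of the integrand
  have hpt : ∀ ω, (if τ < Tsys ω
        then ((Finset.univ.filter fun j : Fin (n i) => T i j ω ≤ τ).card : ℝ)
        else 0)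
      = ∑ x : (l : Fin L) → Fin (n l) → Bool,
          Set.indicator {ω' | X ω' = x} (fun _ => g x) ω := by
    intro ω
    have h1 : ∀ x, Set.indicator {ω' | X ω' = x} (fun _ => g x) ω
        = if X ω = x then g x else 0 := by
      intro x; rw [Set.indicator_apply]; rfl
    rw [Finset.sum_congr rfl fun x _ => h1 x, Finset.sum_ite_eq]
    simp only [Finset.mem_univ, if_true]
    have hmem : τ < Tsys ω ↔ φ (X ω) = true := by
      have := hT τ hτ
      constructor
      · intro h; have : ω ∈ {ω | φ (fun l j => decide (τ < T l j ω)) = true} := this ▸ h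
        exact this
      · intro h; have : ω ∈ {ω' | τ < Tsys ω'} := this ▸ h
        exact this
    have hcard : (Finset.univ.filter fun j : Fin (n i) => T i j ω ≤ τ).card
        = n i - k (X ω) i := by
      have hfc : (Finset.univ.filter fun j : Fin (n i) => T i j ω ≤ τ)
          = (Finset.univ.filter fun j => ¬ X ω i j = true) := by
        refine Finset.filter_congr fun j _ => ?_
        simp [X, not_lt]
      rw [hfc]
      have := Finset.card_filter_add_card_filter_not
        (s := (Finset.univ : Finset (Fin (n i)))) (p := fun j => X ω i j = true)
      simp only [Finset.card_univ, Fintype.card_fin] at this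
      have hk' : k (X ω) i = (Finset.univ.filter fun j => X ω i j = true).card := rfl
      omega
    have hg' : ∀ y, g y = if φ y = true then ((n i - k y i : ℕ) : ℝ) else 0 := fun _ => rfl
    rw [hg' (X ω)]
    by_cases h : τ < Tsys ω
    · rw [if_pos h, if_pos (hmem.1 h), hcard]
    · rw [if_neg h, if_neg (fun hc => h (hmem.2 hc))]
  -- integrate
  have hint : (∫ ω, (if τ < Tsys ω
        then ((Finset.univ.filter fun j : Fin (n i) => T i j ω ≤ τ).card : ℝ)
        else 0) ∂P)
      = ∑ x : (l : Fin L) → Fin (n l) → Bool,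
          g x * ∏ l, (F l τ) ^ (n l - k x l) * (1 - F l τ) ^ (k x l) := by
    rw [integral_congr_ae (Filter.Eventually.of_forall hpt)]
    rw [integral_finset_sum _ (fun x _ =>
      (integrable_const (g x)).indicator (hXsetMeas x))]
    refine Finset.sum_congr rfl fun x _ => ?_
    rw [integral_indicator (hXsetMeas x), setIntegral_const, measureReal_def, hPX x, smul_eq_mul, mul_comm]
  rw [hint]
  -- now the RHS
  have hchoose : ∀ (j : (l : Fin L) → Fin (n l + 1)) (l : Fin L),
      Nat.choose (n l) (n l - (j l : ℕ)) = Nat.choose (n l) (j l : ℕ) := by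
    intro j l
    exact Nat.choose_symm (Nat.lt_succ_iff.1 (j l).isLt)
  have hRHSterm : ∀ j : (l : Fin L) → Fin (n l + 1),
      (j i : ℝ) * survSig n φ (fun l => n l - (j l : ℕ))
          * ∏ l, (Nat.choose (n l) (j l) : ℝ)
              * F l τ ^ (j l : ℕ) * (1 - F l τ) ^ (n l - (j l : ℕ))
      = ∑ x : (l : Fin L) → Fin (n l) → Bool,
          (if (∀ l, k x l = n l - (j l : ℕ)) ∧ φ x = true
            then (j i : ℝ) * ∏ l, F l τ ^ (j l : ℕ) * (1 - F l τ) ^ (n l - (j l : ℕ))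
            else 0) := by
    intro j
    have hprodsplit : (∏ l, (Nat.choose (n l) (j l) : ℝ)
              * F l τ ^ (j l : ℕ) * (1 - F l τ) ^ (n l - (j l : ℕ)))
        = (∏ l, (Nat.choose (n l) (j l) : ℝ))
          * ∏ l, F l τ ^ (j l : ℕ) * (1 - F l τ) ^ (n l - (j l : ℕ)) := by
      rw [← Finset.prod_mul_distrib]
      exact Finset.prod_congr rfl fun l _ => by ring
    have hCne : (∏ l, (Nat.choose (n l) (j l) : ℝ)) ≠ 0 := by
      refine Finset.prod_ne_zero_iff.2 fun l _ => ?_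
      exact_mod_cast (Nat.choose_pos (Nat.lt_succ_iff.1 (j l).isLt)).ne'
    have hss : survSig n φ (fun l => n l - (j l : ℕ))
          * (∏ l, (Nat.choose (n l) (j l) : ℝ))
        = ∑ x : (l : Fin L) → Fin (n l) → Bool,
            if (∀ l, k x l = n l - (j l : ℕ)) ∧ φ x = true then (1 : ℝ) else 0 := by
      rw [survSig]
      have : (∏ l, (Nat.choose (n l) (n l - (j l : ℕ)) : ℝ))
          = ∏ l, (Nat.choose (n l) (j l : ℕ) : ℝ) := by
        exact Finset.prod_congr rfl fun l _ => by rw [hchoose j l]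
      rw [this, div_mul_cancel₀ _ hCne]
    rw [hprodsplit, show (j i : ℝ) * survSig n φ (fun l => n l - (j l : ℕ))
          * ((∏ l, (Nat.choose (n l) (j l) : ℝ))
            * ∏ l, F l τ ^ (j l : ℕ) * (1 - F l τ) ^ (n l - (j l : ℕ)))
        = (survSig n φ (fun l => n l - (j l : ℕ)) * ∏ l, (Nat.choose (n l) (j l) : ℝ))
          * ((j i : ℝ) * ∏ l, F l τ ^ (j l : ℕ) * (1 - F l τ) ^ (n l - (j l : ℕ)))
      from by ring, hss, Finset.sum_mul]
    refine Finset.sum_congr rfl fun x _ => ?_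
    by_cases h : (∀ l, k x l = n l - (j l : ℕ)) ∧ φ x = true
    · rw [if_pos h, if_pos h, one_mul]
    · rw [if_neg h, if_neg h, zero_mul]
  rw [Finset.sum_congr rfl fun j _ => hRHSterm j, Finset.sum_comm]
  refine Finset.sum_congr rfl fun x _ => ?_
  -- the only nonzero j is jx
  set jx : (l : Fin L) → Fin (n l + 1) :=
    fun l => ⟨n l - k x l, Nat.lt_succ_iff.2 (Nat.sub_le _ _)⟩ with hjx
  rw [Fintype.sum_eq_single jx ?side]
  case side =>
    intro j hj
    rw [if_neg]
    rintro ⟨hcount, -⟩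
    apply hj
    funext l
    have h1 : k x l = n l - (j l : ℕ) := hcount l
    have h2 : (j l : ℕ) ≤ n l := Nat.lt_succ_iff.1 (j l).isLt
    have : (j l : ℕ) = n l - k x l := by omega
    exact Fin.ext this
  have hcnt : ∀ l, k x l = n l - ((jx l : ℕ)) := by
    intro l
    simp only [hjx]
    have := hkle x l
    omega
  have hg' : ∀ y, g y = if φ y = true then ((n i - k y i : ℕ) : ℝ) else 0 := fun _ => rfl
  by_cases hx : φ x = true
  · rw [if_pos ⟨hcnt, hx⟩, hg' x, if_pos hx]
    have hji : ((jx i : ℕ) : ℝ) = ((n i - k x i : ℕ) : ℝ) := by simp [hjx]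
    rw [hji]
    refine congrArg _ ?_
    refine Finset.prod_congr rfl fun l _ => ?_
    show F l τ ^ (n l - k x l) * (1 - F l τ) ^ (k x l)
        = F l τ ^ (n l - k x l) * (1 - F l τ) ^ (n l - (n l - k x l))
    rw [Nat.sub_sub_self (hkle x l)]
  · rw [if_neg (fun h => hx h.2), hg' x, if_neg hx, zero_mul]
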